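/- With $F_0, F_1$ as above and entropy-adjusted intensities $\hat\nu_{01}(t) = \nu_{01} F_1(t)/F_0(t)$ and $\hat\nu_{10}(t) = \nu_{10} F_0(t)/F_1(t)$, one has $\hat\nu_{01}(t) > \nu_{01}$ and $\hat\nu_{10}(t) < \nu_{10}$ for all $t \in [0,T)$. -/

import Mathlib

theorem stmt3 (d0 ν01 ν10 T : ℝ)
    (hd0 : 0 < d0) (h01 : 0 < ν01) (h10 : 0 < ν10) (hT : 0 < T)
    (F0 F1 : ℝ → ℝ)
    (hpos0 : ∀ t ∈ Set.Icc (0:ℝ) T, 0 < F0 t)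
    (hpos1 : ∀ t ∈ Set.Icc (0:ℝ) T, 0 < F1 t)
    (hODE0 : ∀ t ∈ Set.Icc (0:ℝ) T, HasDerivAt F0 ((d0 + ν01) * F0 t - ν01 * F1 t) t)
    (hODE1 : ∀ t ∈ Set.Icc (0:ℝ) T, HasDerivAt F1 (-ν10 * F0 t + ν10 * F1 t) t)
    (hterm0 : F0 T = 1) (hterm1 : F1 T = 1) :
    ∀ t ∈ Set.Ico (0:ℝ) T,
      ν01 * F1 t / F0 t > ν01 ∧ ν10 * F0 t / F1 t < ν10 := by
  intro t ht
  set c := ν01 + ν10 with hc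
  set H : ℝ → ℝ := fun s => Real.exp (-c*s) * (F1 s - F0 s) with hH
  have hder : ∀ s ∈ Set.Icc (0:ℝ) T, HasDerivAt H (Real.exp (-c*s) * (-d0 * F0 s)) s := by
    intro s hs
    have h1 := (hODE1 s hs).sub (hODE0 s hs)
    have h2 : HasDerivAt (fun x => Real.exp (-c*x)) (Real.exp (-c*s) * (-c * 1)) s :=
      HasDerivAt.exp ((hasDerivAt_id s).const_mul (-c))
    have h3 := h2.mul h1
    convert h3 using 1
    · rfl
    · rfl
    · rfl
    · simp [hc]; ring
  have hanti : StrictAntiOn H (Set.Icc 0 T) := by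
    apply strictAntiOn_of_deriv_neg (convex_Icc 0 T)
    · intro s hs; exact (hder s hs).continuousAt.continuousWithinAt
    · intro s hs
      rw [interior_Icc] at hs
      have hs' : s ∈ Set.Icc (0:ℝ) T := Set.mem_Icc_of_Ioo hs
      rw [(hder s hs').deriv]
      have hf := hpos0 s hs'
      exact mul_neg_of_pos_of_neg (Real.exp_pos _) (by nlinarith)
  have htT : H T = 0 := by simp [hH, hterm0, hterm1]
  have ht' : t ∈ Set.Icc (0:ℝ) T := ⟨ht.1, le_of_lt ht.2⟩
  have hHt : 0 < H t := by
    have := hanti ht' (Set.right_mem_Icc.mpr hT.le) ht.2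
    rwa [htT] at this
  simp only [hH] at hHt
  have he := Real.exp_pos (-c*t)
  have hG : F0 t < F1 t := by nlinarith
  have h0 := hpos0 t ht'
  have h1 := hpos1 t ht'
  constructor
  · rw [gt_iff_lt, lt_div_iff₀ h0]; nlinarith
  · rw [div_lt_iff₀ h1]; nlinarith
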